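/- If the density f strictly MLRPs the density g (f(x)/g(x) strictly increasing) and both distributions have finite means, then the mean under f is strictly greater than the mean under g: ∫ x·f(x) dx > ∫ x·g(x) dx. -/

import Mathlib

open MeasureTheory

/-- Auxiliary: if `G ≤ F` pointwise, both integrable with equal integrals, and the
set where they agree is a subsingleton, we get a contradiction. -/
lemma mlrp_aux (F G : ℝ → ℝ) (hF : Integrable F) (hG : Integrable G)
    (hle : ∀ x, G x ≤ F x) (heq : (∫ x, F x) = ∫ x, G x)
    (hsub : Set.Subsingleton {x | F x = G x}) : False := by
  set h : ℝ → ℝ := fun x => F x - G x with hh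
  have hint : Integrable h := hF.sub hG
  have hnonneg : 0 ≤ᵐ[volume] h :=
    Filter.Eventually.of_forall fun x => sub_nonneg.mpr (hle x)
  have hzero : (∫ x, h x) = 0 := by
    rw [integral_sub hF hG, heq, sub_self]
  have hiff := integral_pos_iff_support_of_nonneg_ae hnonneg hint
  have hsupp0 : volume (Function.support h) = 0 := by
    by_contra hne
    have : 0 < ∫ x, h x := hiff.mpr (pos_iff_ne_zero.mpr hne)
    linarith
  -- complement of support is the agreement set, which has measure zero
  have hcompl : (Function.support h)ᶜ ⊆ {x | F x = G x} := by
    intro x hx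
    simp only [Function.mem_support, not_not, Set.mem_compl_iff] at hx
    exact sub_eq_zero.mp hx
  have hcompl0 : volume (Function.support h)ᶜ = 0 :=
    measure_mono_null hcompl (hsub.measure_zero volume)
  have : (volume (Set.univ : Set ℝ)) = 0 := by
    have := measure_union_le (μ := volume) (Function.support h) (Function.support h)ᶜ
    rw [Set.union_compl_self, hsupp0, hcompl0] at this
    simpa using this
  simp [Real.volume_univ] at this

/-- Strict MLRP implies strictly greater mean. -/
theorem mlrp_implies_greater_mean
    (f g : ℝ → ℝ)
    (hf_meas : Measurable f) (hg_meas : Measurable g)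
    (hf_pos : ∀ x, 0 < f x) (hg_pos : ∀ x, 0 < g x)
    (hf_int : Integrable f) (hg_int : Integrable g)
    (hf_one : ∫ x, f x = 1) (hg_one : ∫ x, g x = 1)
    (hmlrp : StrictMono (fun x => f x / g x))
    (hf_mom : Integrable (fun x => x * f x))
    (hg_mom : Integrable (fun x => x * g x)) :
    ∫ x, x * f x > ∫ x, x * g x := by
  set r : ℝ → ℝ := fun x => f x / g x with hr
  have hgne : ∀ x, g x ≠ 0 := fun x => (hg_pos x).ne'
  have hsub : Set.Subsingleton {x | f x = g x} := by
    intro x hx y hy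
    apply hmlrp.injective
    simp only [Set.mem_setOf_eq] at hx hy
    show r x = r y
    simp only [hr]
    rw [hx, hy, div_self (hgne x), div_self (hgne y)]
  -- there is a point where r < 1
  obtain ⟨a, ha⟩ : ∃ a, r a < 1 := by
    by_contra hcon
    push_neg at hcon
    exact mlrp_aux f g hf_int hg_int
      (fun x => (one_le_div (hg_pos x)).mp (hcon x))
      (by rw [hf_one, hg_one]) hsub
  -- there is a point where 1 < r
  obtain ⟨b, hb⟩ : ∃ b, 1 < r b := by
    by_contra hcon
    push_neg at hcon
    refine mlrp_aux g f hg_int hf_int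
      (fun x => (div_le_one (hg_pos x)).mp (hcon x))
      (by rw [hf_one, hg_one]) ?_
    intro x hx y hy
    exact hsub (hx.symm) (hy.symm)
  set S : Set ℝ := {x | r x ≤ 1} with hS
  have hSne : S.Nonempty := ⟨a, ha.le⟩
  have hSbdd : BddAbove S := by
    refine ⟨b, fun x hx => ?_⟩
    exact (hmlrp.lt_iff_lt.mp (lt_of_le_of_lt hx hb)).le
  set x₀ : ℝ := sSup S with hx₀
  have hlt : ∀ x < x₀, f x < g x := by
    intro x hx
    obtain ⟨y, hyS, hxy⟩ := exists_lt_of_lt_csSup hSne hx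
    have : r x < 1 := lt_of_lt_of_le (hmlrp hxy) hyS
    exact (div_lt_one (hg_pos x)).mp this
  have hgt : ∀ x, x₀ < x → g x < f x := by
    intro x hx
    have hrx : 1 < r x := by
      by_contra hcon
      push_neg at hcon
      exact absurd (le_csSup hSbdd hcon) (not_le.mpr hx)
    exact (one_lt_div (hg_pos x)).mp hrx
  set φ : ℝ → ℝ := fun x => (x - x₀) * (f x - g x) with hφ
  have hφnonneg : 0 ≤ᵐ[volume] φ := by
    refine Filter.Eventually.of_forall fun x => ?_
    show (0:ℝ) ≤ (x - x₀) * (f x - g x)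
    rcases lt_trichotomy x x₀ with h | h | h
    · have := hlt x h; nlinarith
    · simp [h]
    · exact mul_nonneg (by linarith) (by linarith [hgt x h])
  have hφint : Integrable φ := by
    have : φ = fun x => (x * f x - x * g x) - x₀ * (f x - g x) := by
      funext x; ring
    rw [this]
    exact (hf_mom.sub hg_mom).sub ((hf_int.sub hg_int).const_mul x₀)
  have hφsupp : volume (Function.support φ) ≠ 0 := by
    have hcompl : (Function.support φ)ᶜ ⊆ {x₀} ∪ {x | f x = g x} := by
      intro x hx
      simp only [Function.mem_support, not_not, Set.mem_compl_iff] at hx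
      rcases mul_eq_zero.mp hx with h | h
      · exact Or.inl (by simpa [sub_eq_zero] using h)
      · exact Or.inr (sub_eq_zero.mp h)
    have hcompl0 : volume (Function.support φ)ᶜ = 0 := by
      refine measure_mono_null hcompl ?_
      refine le_antisymm ?_ zero_le
      calc volume ({x₀} ∪ {x | f x = g x})
          ≤ volume {x₀} + volume {x | f x = g x} := measure_union_le _ _
        _ = 0 := by rw [Real.volume_singleton, hsub.measure_zero volume]; simp
    intro hzero
    have : (volume (Set.univ : Set ℝ)) = 0 := by
      have := measure_union_le (μ := volume) (Function.support φ) (Function.support φ)ᶜ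
      rw [Set.union_compl_self, hzero, hcompl0] at this
      simpa using this
    simp [Real.volume_univ] at this
  have hpos : 0 < ∫ x, φ x :=
    (integral_pos_iff_support_of_nonneg_ae hφnonneg hφint).mpr
      (pos_iff_ne_zero.mpr hφsupp)
  have hcalc : (∫ x, φ x) = (∫ x, x * f x) - ∫ x, x * g x := by
    have h1 : φ = fun x => (x * f x - x * g x) - x₀ * (f x - g x) := by
      funext x; ring
    have hi1 : Integrable (fun x => x * f x - x * g x) := hf_mom.sub hg_mom
    have hi2 : Integrable (fun x => x₀ * (f x - g x)) := (hf_int.sub hg_int).const_mul x₀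
    rw [h1, integral_sub hi1 hi2, integral_sub hf_mom hg_mom, integral_const_mul,
      integral_sub hf_int hg_int, hf_one, hg_one]
    ring
  rw [hcalc] at hpos
  linarith
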